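/- Let k = 2, a₁ⱼ = 1 for all j, aᵢ₁ = 1 for all i, and all other aᵢⱼ = 0. Then the operator F (given by x′₁ = λ₁, x′ᵢ = λᵢ((1+λ₁)/(1+‖x‖))² for i ≥ 2) has exactly one fixed point in ℓ¹₊. -/

import Mathlib

/-- The operator of example 2 (k = 2, a₁ⱼ = aᵢ₁ = 1, other aᵢⱼ = 0):
x′₁ = λ₁ and x′ᵢ = λᵢ((1+λ₁)/(1+‖x‖))² for i ≥ 2.
Index 0 plays the paper's index 1. -/
noncomputable def Fex (l : ℕ → ℝ) (x : ℕ → ℝ) : ℕ → ℝ :=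
  fun i => if i = 0 then l 0 else l i * ((1 + l 0) / (1 + ∑' j, x j)) ^ 2

lemma cubic_mono {l0 a b : ℝ} (h0 : 0 ≤ l0) (ha : l0 ≤ a) (hab : a < b) :
    (a - l0) * (1 + a) ^ 2 < (b - l0) * (1 + b) ^ 2 := by
  have h1b : (0:ℝ) < (1 + b) ^ 2 := pow_pos (by linarith) 2
  have h1 : (1 + a) ^ 2 ≤ (1 + b) ^ 2 :=
    pow_le_pow_left₀ (by linarith) (by linarith) 2
  calc (a - l0) * (1 + a) ^ 2 ≤ (a - l0) * (1 + b) ^ 2 :=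
        mul_le_mul_of_nonneg_left h1 (by linarith)
    _ < (b - l0) * (1 + b) ^ 2 :=
        mul_lt_mul_of_pos_right (by linarith) h1b

/-- this operator has exactly one fixed point in ℓ¹₊. -/
theorem stmt10 (l : ℕ → ℝ) (hl : ∀ i, 0 < l i) (hlsum : Summable l)
    (hnorm : l 0 < ∑' i, l i) :
    ∃! x : ℕ → ℝ, ((∀ i, 0 < x i) ∧ Summable x) ∧ Fex l x = x := by
  set S := ∑' i, l i with hSdef
  have hl0 : 0 < l 0 := hl 0
  have hSl : 0 < S - l 0 := by linarith
  set K := (1 + l 0) ^ 2 * (S - l 0) with hKdef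
  have hK : 0 < K := by positivity
  -- tail sum of l
  have hS1 : ∑' i, l (i + 1) = S - l 0 := by
    have := Summable.tsum_eq_zero_add hlsum
    rw [hSdef]
    linarith [this]
  -- find the root t of the cubic
  have hcont : ContinuousOn (fun t : ℝ => (t - l 0) * (1 + t) ^ 2)
      (Set.Icc (l 0) (l 0 + K)) := by fun_prop
  have hmem : K ∈ Set.Icc ((l 0 - l 0) * (1 + l 0) ^ 2)
      ((l 0 + K - l 0) * (1 + (l 0 + K)) ^ 2) := by
    constructor
    · nlinarith
    · nlinarith [sq_nonneg (l 0 + K)]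
  obtain ⟨t, htmem, ht⟩ := intermediate_value_Icc (by linarith : l 0 ≤ l 0 + K) hcont hmem
  simp only at ht
  have htl0 : l 0 ≤ t := htmem.1
  have htgt : l 0 < t := by
    rcases htl0.lt_or_eq with h | h
    · exact h
    · exfalso; rw [← h] at ht; simp at ht; linarith
  have h1t : (0:ℝ) < 1 + t := by linarith
  have h1t2 : (0:ℝ) < (1 + t) ^ 2 := pow_pos h1t 2
  set c := ((1 + l 0) / (1 + t)) ^ 2 with hcdef
  have hc : 0 < c := by positivity
  have hceq : c * (1 + t) ^ 2 = (1 + l 0) ^ 2 := by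
    rw [hcdef, div_pow]
    field_simp
  -- the candidate fixed point
  set x : ℕ → ℝ := fun i => if i = 0 then l 0 else l i * c with hxdef
  have hx0 : x 0 = l 0 := rfl
  have hxs : ∀ i, x (i + 1) = c * l (i + 1) := by
    intro i; simp [hxdef, mul_comm]
  have hxsum : Summable x := by
    rw [← summable_nat_add_iff 1]
    exact Summable.congr (((summable_nat_add_iff 1).mpr hlsum).mul_left c)
      (fun i => (hxs i).symm)
  have hxtsum : ∑' i, x i = t := by
    rw [Summable.tsum_eq_zero_add hxsum, hx0]
    have : ∑' i, x (i + 1) = c * (S - l 0) := by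
      rw [tsum_congr hxs, tsum_mul_left, hS1]
    rw [this]
    -- l 0 + c * (S - l 0) = t, from (t - l 0)(1+t)^2 = K and c(1+t)^2 = (1+l0)^2
    have ht' : (t - l 0) * (1 + t) ^ 2 = (1 + l 0) ^ 2 * (S - l 0) := ht.trans hKdef
    have h2 : c * (S - l 0) * (1 + t) ^ 2 = (t - l 0) * (1 + t) ^ 2 := by
      linear_combination (S - l 0) * hceq - ht'
    have := mul_right_cancel₀ (ne_of_gt h1t2) h2
    linarith
  have hxfix : Fex l x = x := by
    funext i
    rcases Nat.eq_zero_or_pos i with h | h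
    · simp [Fex, h, hxdef]
    · have : i ≠ 0 := Nat.pos_iff_ne_zero.mp h
      simp only [Fex, this, if_false, hxtsum]
      show _ = if i = 0 then l 0 else l i * c
      rw [if_neg this]
  refine ⟨x, ⟨⟨fun i => ?_, hxsum⟩, hxfix⟩, ?_⟩
  · rcases Nat.eq_zero_or_pos i with h | h
    · rw [h, hx0]; exact hl0
    · have hne : i ≠ 0 := Nat.pos_iff_ne_zero.mp h
      simp only [hxdef, if_neg hne]
      exact mul_pos (hl i) hc
  -- uniqueness
  rintro y ⟨⟨hypos, hysum⟩, hyfix⟩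
  set s := ∑' i, y i with hsdef
  have hy0 : y 0 = l 0 := by
    have := congrFun hyfix 0
    simpa [Fex] using this.symm
  have hys : ∀ i, y (i + 1) = l (i + 1) * ((1 + l 0) / (1 + s)) ^ 2 := by
    intro i
    have := congrFun hyfix (i + 1)
    simpa [Fex, hsdef] using this.symm
  have hy0le : y 0 ≤ s := Summable.le_tsum hysum 0 (fun j _ => (hypos j).le)
  have hs0 : 0 < s := lt_of_lt_of_le (hy0 ▸ hl0) hy0le
  have h1s : (0:ℝ) < 1 + s := by linarith
  have h1s2 : (0:ℝ) < (1 + s) ^ 2 := pow_pos h1s 2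
  set c' := ((1 + l 0) / (1 + s)) ^ 2 with hc'def
  have hc' : 0 < c' := by positivity
  have hc'eq : c' * (1 + s) ^ 2 = (1 + l 0) ^ 2 := by
    rw [hc'def, div_pow]; field_simp
  have hstail : ∑' i, y (i + 1) = c' * (S - l 0) := by
    have he : (fun i => y (i + 1)) = fun i => c' * l (i + 1) :=
      funext fun i => by rw [hys i, mul_comm]
    rw [he, tsum_mul_left, hS1]
  have hseq : s = l 0 + c' * (S - l 0) := by
    rw [hsdef, Summable.tsum_eq_zero_add hysum, hy0, hstail]
  have hslt : l 0 < s := by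
    have := mul_pos hc' hSl
    linarith [hseq]
  have hscubic : (s - l 0) * (1 + s) ^ 2 = K := by
    have hd : s - l 0 = c' * (S - l 0) := by linarith
    rw [hd, hKdef]
    linear_combination (S - l 0) * hc'eq
  have hst : s = t := by
    rcases lt_trichotomy s t with h | h | h
    · exfalso
      have := cubic_mono hl0.le hslt.le h
      rw [hscubic, ht] at this; exact lt_irrefl _ this
    · exact h
    · exfalso
      have := cubic_mono hl0.le htgt.le h
      rw [hscubic, ht] at this; exact lt_irrefl _ this
  funext i
  rcases Nat.eq_zero_or_pos i with h | h
  · rw [h, hy0, hx0]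
  · obtain ⟨j, rfl⟩ := Nat.exists_eq_add_of_lt h
    simp only [Nat.zero_add]
    rw [hys j, hxs j]
    show l (j + 1) * ((1 + l 0) / (1 + s)) ^ 2 = ((1 + l 0) / (1 + t)) ^ 2 * l (j + 1)
    rw [hst, mul_comm]
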